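/- Let L = F e₀ ⋉ V be an indecomposable almost Abelian Lie algebra not isomorphic to the Heisenberg algebra H_F. Then every automorphism φ of L satisfies φ(V) = V, and φ has the form φ(e₀) = α e₀ + γ, φ|_V = Δ, where α ∈ F*, γ ∈ V, Δ ∈ GL(V) and Δ ∘ ad_{e₀} = α · ad_{e₀} ∘ Δ. Conversely every such map is an automorphism. -/
import Mathlib


variable {F : Type*} [Field F] {V : Type*} [AddCommGroup V] [Module F V]

/-- The almost Abelian Lie algebra `F e₀ ⋉ V` determined by the operator `T = ad_{e₀}|_V`:
the underlying vector space is `F × V`, with bracket `[(t,v),(s,w)] = (0, t • T w - s • T v)`. -/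
def AA (F V : Type*) [Field F] [AddCommGroup V] [Module F V] (_T : Module.End F V) : Type _ :=
  F × V

namespace AA

variable {T : Module.End F V}

instance : AddCommGroup (AA F V T) := inferInstanceAs (AddCommGroup (F × V))
instance : Module F (AA F V T) := inferInstanceAs (Module F (F × V))

instance : LieRing (AA F V T) where
  bracket := fun (x y : F × V) => (((0 : F), x.1 • T y.2 - y.1 • T x.2) : F × V)
  add_lie := by
    rintro ⟨a, u⟩ ⟨b, v⟩ ⟨c, w⟩
    show (((0 : F), (a + b) • T w - c • T (u + v)) : F × V)
      = (((0 : F), a • T w - c • T u) : F × V) + (((0 : F), b • T w - c • T v) : F × V)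
    ext
    · simp
    · show (a + b) • T w - c • T (u + v) = (a • T w - c • T u) + (b • T w - c • T v)
      simp only [map_add, smul_add, add_smul]
      module
  lie_add := by
    rintro ⟨a, u⟩ ⟨b, v⟩ ⟨c, w⟩
    show (((0 : F), a • T (v + w) - (b + c) • T u) : F × V)
      = (((0 : F), a • T v - b • T u) : F × V) + (((0 : F), a • T w - c • T u) : F × V)
    ext
    · simp
    · show a • T (v + w) - (b + c) • T u = (a • T v - b • T u) + (a • T w - c • T u)
      simp only [map_add, smul_add, add_smul]
      module
  lie_self := by
    rintro ⟨a, u⟩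
    show (((0 : F), a • T u - a • T u) : F × V) = (0 : F × V)
    ext
    · simp
    · show a • T u - a • T u = (0 : V)
      simp
  leibniz_lie := by
    rintro ⟨a, u⟩ ⟨b, v⟩ ⟨c, w⟩
    show (((0 : F), a • T (b • T w - c • T v) - (0 : F) • T u) : F × V)
      = (((0 : F), (0 : F) • T w - c • T (a • T v - b • T u)) : F × V)
        + (((0 : F), b • T (a • T w - c • T u) - (0 : F) • T v) : F × V)
    ext
    · simp
    · show a • T (b • T w - c • T v) - (0 : F) • T u
        = ((0 : F) • T w - c • T (a • T v - b • T u)) + (b • T (a • T w - c • T u) - (0 : F) • T v)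
      simp only [map_sub, map_smul, zero_smul, smul_sub, smul_smul]
      module

instance : LieAlgebra F (AA F V T) where
  lie_smul := by
    rintro r ⟨a, u⟩ ⟨b, v⟩
    show (((0 : F), a • T (r • v) - (r • b) • T u) : F × V)
      = r • (((0 : F), a • T v - b • T u) : F × V)
    ext
    · simp
    · show a • T (r • v) - (r • b) • T u = r • (a • T v - b • T u)
      simp only [map_smul, smul_sub, smul_smul, smul_eq_mul]
      module

/-- The distinguished element `e₀`. -/
def e0 (T : Module.End F V) : AA F V T := ((1, 0) : F × V)

/-- The inclusion of the Abelian ideal `V` into `F e₀ ⋉ V`. -/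
def incl (T : Module.End F V) : V →ₗ[F] AA F V T where
  toFun v := ((0, v) : F × V)
  map_add' u v := by
    show (((0 : F), u + v) : F × V) = (((0 : F), u) : F × V) + (((0 : F), v) : F × V)
    ext <;> simp
  map_smul' r v := by
    show (((0 : F), r • v) : F × V) = r • (((0 : F), v) : F × V)
    ext <;> simp

@[simp] lemma bracket_e0_incl (v : V) : ⁅e0 T, incl T v⁆ = incl T (T v) := by
  show (((0 : F), (1 : F) • T v - (0 : F) • T (0 : V)) : F × V) = (((0 : F), T v) : F × V)
  ext <;> simp

end AA


/-- A Lie algebra is indecomposable if it is not the direct sum of two nonzero ideals. -/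
def LieIndecomposable (F L : Type*) [Field F] [LieRing L] [LieAlgebra F L] : Prop :=
  ¬∃ (I J : LieIdeal F L), I ≠ ⊥ ∧ J ≠ ⊥ ∧ I ⊓ J = ⊥ ∧ I ⊔ J = ⊤

/-- The operator defining the Heisenberg algebra: `T (a, b) = (b, 0)`. -/
def heisT (F : Type*) [Field F] : Module.End F (F × F) :=
  (LinearMap.snd F F F).prod 0

/-- The Heisenberg Lie algebra `H_F`, with basis `e₀, e₁ = ((0,(1,0)))`, `e₂ = ((0,(0,1)))` and
relations `[e₀, e₂] = e₁`, `[e₀, e₁] = [e₁, e₂] = 0`. -/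
abbrev Heisenberg (F : Type*) [Field F] : Type _ := AA F (F × F) (heisT F)

section Aux

variable {F : Type*} [Field F] {V : Type*} [AddCommGroup V] [Module F V]
variable {T : Module.End F V}

namespace AA

/-- First coordinate, as a linear map. -/
def fstL (T : Module.End F V) : AA F V T →ₗ[F] F := LinearMap.fst F F V

/-- Second coordinate, as a linear map. -/
def sndL (T : Module.End F V) : AA F V T →ₗ[F] V := LinearMap.snd F F V

@[simp] lemma fstL_incl (v : V) : fstL T (incl T v) = 0 := rfl
@[simp] lemma sndL_incl (v : V) : sndL T (incl T v) = v := rfl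
@[simp] lemma fstL_e0 : fstL T (e0 T) = 1 := rfl
@[simp] lemma sndL_e0 : sndL T (e0 T) = 0 := rfl
@[simp] lemma fstL_bracket (x y : AA F V T) : fstL T ⁅x, y⁆ = 0 := rfl
@[simp] lemma sndL_bracket (x y : AA F V T) :
    sndL T ⁅x, y⁆ = fstL T x • T (sndL T y) - fstL T y • T (sndL T x) := rfl

lemma expand (x : AA F V T) : x = fstL T x • e0 T + incl T (sndL T x) := by
  obtain ⟨a, u⟩ := x
  show ((a, u) : F × V) = a • ((1, 0) : F × V) + ((0, u) : F × V)
  ext <;> simp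

lemma eq_incl_snd (x : AA F V T) (h : fstL T x = 0) : x = incl T (sndL T x) := by
  rw [expand x, h]; simp

lemma ext_iff' (x y : AA F V T) : x = y ↔ fstL T x = fstL T y ∧ sndL T x = sndL T y := by
  obtain ⟨a, u⟩ := x; obtain ⟨b, v⟩ := y
  constructor
  · rintro h; rw [h]; exact ⟨rfl, rfl⟩
  · rintro ⟨h1, h2⟩
    show ((a, u) : F × V) = ((b, v) : F × V)
    exact Prod.ext h1 h2

end AA

end Aux
section Aux2

variable {F : Type*} [Field F] {V : Type*} [AddCommGroup V] [Module F V]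
variable {V' : Type*} [AddCommGroup V'] [Module F V']

namespace AA

/-- Transport of almost Abelian Lie algebras along an intertwining linear equivalence. -/
def congr {T : Module.End F V} {T' : Module.End F V'} (Θ : V ≃ₗ[F] V')
    (h : ∀ v, Θ (T v) = T' (Θ v)) : AA F V T ≃ₗ⁅F⁆ AA F V' T' :=
  { toFun := fun x => ((( (x : F × V).1, Θ (x : F × V).2) : F × V') : AA F V' T')
    invFun := fun y => ((( (y : F × V').1, Θ.symm (y : F × V').2) : F × V) : AA F V T)
    left_inv := by rintro ⟨a, u⟩; show ((a, Θ.symm (Θ u)) : F × V) = (a, u); simp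
    right_inv := by rintro ⟨a, u⟩; show ((a, Θ (Θ.symm u)) : F × V') = (a, u); simp
    map_add' := by
      rintro ⟨a, u⟩ ⟨b, v⟩
      show ((a + b, Θ (u + v)) : F × V') = (a, Θ u) + (b, Θ v)
      ext <;> simp
    map_smul' := by
      rintro t ⟨a, u⟩
      show ((t * a, Θ (t • u)) : F × V') = t • ((a, Θ u) : F × V')
      ext <;> simp
    map_lie' := by
      rintro ⟨a, u⟩ ⟨b, v⟩
      show (((0 : F), Θ (a • T v - b • T u)) : F × V')
        = (((0 : F), a • T' (Θ v) - b • T' (Θ u)) : F × V')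
      ext
      · rfl
      · show Θ (a • T v - b • T u) = a • T' (Θ v) - b • T' (Θ u)
        simp [h] }

variable {T : Module.End F V}

/-- The automorphism of `AA F V T` determined by `(α, γ, Δ)`. -/
def mkAut (T : Module.End F V) (α : F) (hα : α ≠ 0) (γ : V) (Δ : V ≃ₗ[F] V)
    (hΔ : ∀ v, Δ (T v) = α • T (Δ v)) : AA F V T ≃ₗ⁅F⁆ AA F V T :=
  { toFun := fun x => (((α * (x : F × V).1, (x : F × V).1 • γ + Δ (x : F × V).2) : F × V) : AA F V T)
    invFun := fun y =>
      (((α⁻¹ * (y : F × V).1, Δ.symm ((y : F × V).2 - (α⁻¹ * (y : F × V).1) • γ)) : F × V) : AA F V T)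
    left_inv := by
      rintro ⟨a, u⟩
      show ((α⁻¹ * (α * a), Δ.symm ((a • γ + Δ u) - (α⁻¹ * (α * a)) • γ)) : F × V) = (a, u)
      have : α⁻¹ * (α * a) = a := by field_simp
      rw [this]
      ext <;> simp
    right_inv := by
      rintro ⟨a, u⟩
      show ((α * (α⁻¹ * a), (α⁻¹ * a) • γ + Δ (Δ.symm (u - (α⁻¹ * a) • γ))) : F × V) = (a, u)
      have : α * (α⁻¹ * a) = a := by field_simp
      rw [this]
      ext
      · rfl
      · show (α⁻¹ * a) • γ + Δ (Δ.symm (u - (α⁻¹ * a) • γ)) = u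
        rw [Δ.apply_symm_apply]; abel
    map_add' := by
      rintro ⟨a, u⟩ ⟨b, v⟩
      show ((α * (a + b), (a + b) • γ + Δ (u + v)) : F × V)
        = ((α * a, a • γ + Δ u) : F × V) + ((α * b, b • γ + Δ v) : F × V)
      ext
      · show α * (a + b) = α * a + α * b; ring
      · show (a + b) • γ + Δ (u + v) = (a • γ + Δ u) + (b • γ + Δ v)
        simp only [map_add, add_smul]; abel
    map_smul' := by
      rintro t ⟨a, u⟩
      show ((α * (t * a), (t * a) • γ + Δ (t • u)) : F × V)
        = t • ((α * a, a • γ + Δ u) : F × V)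
      ext
      · show α * (t * a) = t * (α * a); ring
      · show (t * a) • γ + Δ (t • u) = t • (a • γ + Δ u)
        simp only [map_smul, smul_add, smul_smul]
    map_lie' := by
      rintro ⟨a, u⟩ ⟨b, v⟩
      show ((α * 0, (0 : F) • γ + Δ (a • T v - b • T u)) : F × V)
        = (((0 : F), (α * a) • T (b • γ + Δ v) - (α * b) • T (a • γ + Δ u)) : F × V)
      ext
      · show α * 0 = 0; ring
      · show (0 : F) • γ + Δ (a • T v - b • T u)
          = (α * a) • T (b • γ + Δ v) - (α * b) • T (a • γ + Δ u)
        simp only [zero_smul, zero_add, map_sub, map_smul, hΔ, map_add, smul_add, smul_smul]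
        module }

@[simp] lemma mkAut_e0 (α : F) (hα : α ≠ 0) (γ : V) (Δ : V ≃ₗ[F] V)
    (hΔ : ∀ v, Δ (T v) = α • T (Δ v)) :
    mkAut T α hα γ Δ hΔ (e0 T) = α • e0 T + incl T γ := by
  show ((α * 1, (1 : F) • γ + Δ 0) : F × V) = α • ((1, 0) : F × V) + ((0, γ) : F × V)
  ext <;> simp

@[simp] lemma mkAut_incl (α : F) (hα : α ≠ 0) (γ : V) (Δ : V ≃ₗ[F] V)
    (hΔ : ∀ v, Δ (T v) = α • T (Δ v)) (v : V) :
    mkAut T α hα γ Δ hΔ (incl T v) = incl T (Δ v) := by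
  show ((α * 0, (0 : F) • γ + Δ v) : F × V) = ((0, Δ v) : F × V)
  ext <;> simp

end AA

end Aux2
section Aux3

variable {F : Type*} [Field F] {V : Type*} [AddCommGroup V] [Module F V]
variable {T : Module.End F V}

namespace AA

lemma bracket_incl_incl (v w : V) : ⁅incl T v, incl T w⁆ = 0 := by
  show (((0 : F), (0 : F) • T w - (0 : F) • T v) : F × V) = ((0, 0) : F × V)
  ext <;> simp

/-- Key lemma: under the hypotheses, every automorphism maps `V` into `V`. -/
lemma key (hT : T ≠ 0) (hind : LieIndecomposable F (AA F V T))
    (hheis : ¬Nonempty (AA F V T ≃ₗ⁅F⁆ Heisenberg F))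
    (φ : AA F V T ≃ₗ⁅F⁆ AA F V T) :
    ∀ v : V, fstL T (φ (incl T v)) = 0 := by
  set Φ : AA F V T →ₗ[F] AA F V T := φ.toLinearEquiv.toLinearMap with hΦ
  set Ψ : AA F V T →ₗ[F] AA F V T := φ.symm.toLinearEquiv.toLinearMap with hΨ
  have hΦa : ∀ x, Φ x = φ x := fun x => rfl
  have hΨa : ∀ x, Ψ x = φ.symm x := fun x => rfl
  set f : V →ₗ[F] F := (fstL T).comp (Φ.comp (incl T)) with hf
  set D : V →ₗ[F] V := (sndL T).comp (Φ.comp (incl T)) with hD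
  set E : V →ₗ[F] V := (sndL T).comp (Ψ.comp (incl T)) with hE
  have hfa : ∀ v, f v = fstL T (φ (incl T v)) := fun v => rfl
  have hDa : ∀ v, D v = sndL T (φ (incl T v)) := fun v => rfl
  have hEa : ∀ v, E v = sndL T (φ.symm (incl T v)) := fun v => rfl
  set α : F := fstL T (φ (e0 T)) with hα
  set γ : V := sndL T (φ (e0 T)) with hγ
  set δ : V := sndL T (φ.symm (e0 T)) with hδ
  have hplie : ∀ v, φ (incl T (T v)) = ⁅φ (e0 T), φ (incl T v)⁆ := fun v => by
    rw [← bracket_e0_incl, LieEquiv.map_lie]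
  have R1a : ∀ v, f (T v) = 0 := fun v => by
    rw [hfa, hplie, fstL_bracket]
  have R1b : ∀ v, D (T v) = α • T (D v) - f v • T γ := fun v => by
    rw [hDa, hplie, sndL_bracket, ← hα, ← hγ, ← hfa, ← hDa]
  have hsadd : ∀ x y : AA F V T, φ.symm (x + y) = φ.symm x + φ.symm y :=
    fun x y => map_add Ψ x y
  have hssmul : ∀ (t : F) (x : AA F V T), φ.symm (t • x) = t • φ.symm x :=
    fun t x => map_smul Ψ t x
  have R2 : ∀ v, v = f v • δ + E (D v) := fun v => by
    have h1 : incl T v = φ.symm (f v • e0 T + incl T (D v)) := by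
      rw [hfa, hDa, ← expand (φ (incl T v)), LieEquiv.symm_apply_apply]
    have h2 := congrArg (sndL T) h1
    rw [hsadd, hssmul, map_add, map_smul] at h2
    rw [sndL_incl] at h2
    exact h2
  have R3 : ∀ v w, f v • T (D w) = f w • T (D v) := fun v w => by
    have h1 : ⁅φ (incl T v), φ (incl T w)⁆ = 0 := by
      rw [← LieEquiv.map_lie, bracket_incl_incl]
      exact map_zero Φ
    have h2 := congrArg (sndL T) h1
    rw [sndL_bracket, map_zero, ← hfa, ← hfa, ← hDa, ← hDa, sub_eq_zero] at h2
    exact h2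
  -- now the main argument
  by_contra hcon
  push_neg at hcon
  obtain ⟨v0, hv0⟩ := hcon
  rw [← hfa] at hv0
  set w0 : V := (f v0)⁻¹ • v0 with hw0def
  have hw0 : f w0 = 1 := by
    rw [hw0def, map_smul, smul_eq_mul, inv_mul_cancel₀ hv0]
  set c : V := T (D w0) with hcdef
  have hc : ∀ w, T (D w) = f w • c := fun w => by
    have := R3 w0 w
    rw [hw0, one_smul] at this
    rw [this, hcdef]
  set d : V := α • c - T γ with hddef
  have hd : ∀ v, D (T v) = f v • d := fun v => by
    rw [R1b, hc, hddef, smul_comm α (f v) c, ← smul_sub]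
  set e : V := E d with hedef
  have hTe : ∀ u, T u = f u • e := fun u => by
    have h1 := R2 (T u)
    rw [R1a, zero_smul, zero_add, hd, map_smul] at h1
    rw [h1, hedef]
  have he : e ≠ 0 := by
    intro h
    exact hT (LinearMap.ext fun u => by rw [hTe, h, smul_zero]; rfl)
  have hfe : f e = 0 := by
    have h1 := R1a w0
    rw [hTe w0, hw0, one_smul] at h1
    exact h1
  by_cases hker : ∀ u : V, f u = 0 → u ∈ Submodule.span F {e}
  · -- L is isomorphic to the Heisenberg algebra: contradiction
    set Θ₀ : F × F →ₗ[F] V :=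
      (LinearMap.toSpanSingleton F V e).comp (LinearMap.fst F F F)
        + (LinearMap.toSpanSingleton F V w0).comp (LinearMap.snd F F F) with hΘ₀def
    have hΘ₀ : ∀ p : F × F, Θ₀ p = p.1 • e + p.2 • w0 := fun p => rfl
    have hfΘ : ∀ p : F × F, f (Θ₀ p) = p.2 := fun p => by
      rw [hΘ₀, map_add, map_smul, map_smul, hfe, hw0, smul_eq_mul, smul_eq_mul]
      ring
    have hinj : Function.Injective Θ₀ := by
      rw [← LinearMap.ker_eq_bot]
      refine (Submodule.eq_bot_iff _).2 fun p hp => ?_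
      rw [LinearMap.mem_ker] at hp
      have h2 : p.2 = 0 := by rw [← hfΘ p, hp, map_zero]
      have h1 : p.1 • e = 0 := by
        have := hΘ₀ p
        rw [hp, h2, zero_smul, add_zero] at this
        exact this.symm
      rcases smul_eq_zero.1 h1 with h | h
      · exact Prod.ext h h2
      · exact absurd h he
    have hsurj : Function.Surjective Θ₀ := by
      intro v
      have hv : v - f v • w0 ∈ Submodule.span F {e} := by
        refine hker _ ?_
        rw [map_sub, map_smul, hw0, smul_eq_mul, mul_one, sub_self]
      obtain ⟨s, hs⟩ := Submodule.mem_span_singleton.1 hv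
      refine ⟨(s, f v), ?_⟩
      rw [hΘ₀]
      show s • e + f v • w0 = v
      rw [hs]
      abel
    set Θ : (F × F) ≃ₗ[F] V := LinearEquiv.ofBijective Θ₀ ⟨hinj, hsurj⟩ with hΘdef
    have hΘa : ∀ p, Θ p = Θ₀ p := fun p => rfl
    have hint : ∀ p : F × F, Θ (heisT F p) = T (Θ p) := fun p => by
      have h1 : heisT F p = (p.2, 0) := rfl
      have h2 : T (Θ p) = p.2 • e := by rw [hΘa, hTe, hfΘ]
      have h3 : Θ ((p.2, 0) : F × F) = p.2 • e := by
        rw [hΘa, hΘ₀]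
        show p.2 • e + (0 : F) • w0 = p.2 • e
        rw [zero_smul, add_zero]
      rw [h1, h3, h2]
    exact hheis ⟨(AA.congr Θ hint).symm⟩
  · -- L is decomposable: contradiction
    push_neg at hker
    obtain ⟨u, hu0, hu⟩ := hker
    have hTu : T u = 0 := by rw [hTe, hu0, zero_smul]
    obtain ⟨C, hC⟩ := Submodule.exists_isCompl (Submodule.span F {e} ⊔ Submodule.span F {u})
    set I : LieIdeal F (AA F V T) :=
      { toSubmodule := Submodule.prod ⊥ (Submodule.span F {u})
        lie_mem := by
          rintro ⟨a, z⟩ ⟨b, w⟩ hm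
          obtain ⟨hb, hw⟩ := hm
          obtain ⟨t, rfl⟩ := Submodule.mem_span_singleton.1 hw
          have hb0 : b = 0 := hb
          show (((0 : F), a • T (t • u) - b • T z) : F × V) ∈
            Submodule.prod (⊥ : Submodule F F) (Submodule.span F {u})
          refine ⟨by simp, ?_⟩
          have : a • T (t • u) - b • T z = 0 := by
            rw [map_smul, hTu, smul_zero, smul_zero, hb0, zero_smul, sub_zero]
          show a • T (t • u) - b • T z ∈ Submodule.span F {u}
          rw [this]
          exact Submodule.zero_mem _ } with hIdef
    set J : LieIdeal F (AA F V T) :=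
      { toSubmodule := Submodule.prod ⊤ (C ⊔ Submodule.span F {e})
        lie_mem := by
          rintro ⟨a, z⟩ ⟨b, w⟩ _
          show (((0 : F), a • T w - b • T z) : F × V) ∈
            Submodule.prod ⊤ (C ⊔ Submodule.span F {e})
          refine ⟨trivial, ?_⟩
          have he1 : a • T w - b • T z ∈ Submodule.span F {e} := by
            rw [hTe w, hTe z]
            exact Submodule.sub_mem _
              (Submodule.smul_mem _ _ (Submodule.smul_mem _ _ (Submodule.mem_span_singleton_self e)))
              (Submodule.smul_mem _ _ (Submodule.smul_mem _ _ (Submodule.mem_span_singleton_self e)))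
          exact Submodule.mem_sup_right he1 } with hJdef
    refine hind ⟨I, J, ?_, ?_, ?_, ?_⟩
    · -- I ≠ ⊥
      intro h
      have hmem : (show AA F V T from ((0 : F), u)) ∈ I :=
        ⟨Submodule.zero_mem _, Submodule.mem_span_singleton_self u⟩
      rw [h, LieSubmodule.mem_bot] at hmem
      have : u = 0 := congrArg Prod.snd hmem
      exact hu (this ▸ Submodule.zero_mem _)
    · -- J ≠ ⊥
      intro h
      have hmem : (show AA F V T from ((1 : F), (0 : V))) ∈ J := ⟨trivial, Submodule.zero_mem _⟩
      rw [h, LieSubmodule.mem_bot] at hmem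
      have : (1 : F) = 0 := congrArg Prod.fst hmem
      exact one_ne_zero this
    · -- I ⊓ J = ⊥
      refine (LieSubmodule.eq_bot_iff _).2 fun m hm => ?_
      rw [LieSubmodule.mem_inf] at hm
      obtain ⟨hmI, hmJ⟩ := hm
      obtain ⟨b, w⟩ := m
      obtain ⟨hb, hw⟩ := hmI
      obtain ⟨-, hwJ⟩ := hmJ
      obtain ⟨t, rfl⟩ := Submodule.mem_span_singleton.1 hw
      have hb0 : b = 0 := hb
      obtain ⟨x, hx, y, hy, hxy⟩ := Submodule.mem_sup.1 hwJ
      obtain ⟨s, rfl⟩ := Submodule.mem_span_singleton.1 hy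
      have hxmem : x ∈ Submodule.span F {e} ⊔ Submodule.span F {u} := by
        have hxy' : x + s • e = t • u := hxy
        have hxeq : x = t • u - s • e := by rw [← hxy']; abel
        rw [hxeq]
        exact Submodule.sub_mem _
          (Submodule.mem_sup_right (Submodule.smul_mem _ _ (Submodule.mem_span_singleton_self u)))
          (Submodule.mem_sup_left (Submodule.smul_mem _ _ (Submodule.mem_span_singleton_self e)))
      have hx0 : x = 0 := by
        have := hC.disjoint.le_bot ⟨hxmem, hx⟩
        simpa using this
      have hxy' : x + s • e = t • u := hxy
      have htu : t • u = s • e := by rw [← hxy', hx0, zero_add]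
      have ht0 : t = 0 := by
        by_contra ht
        apply hu
        have : u = t⁻¹ • (s • e) := by
          rw [← htu, smul_smul, inv_mul_cancel₀ ht, one_smul]
        rw [this]
        exact Submodule.smul_mem _ _ (Submodule.smul_mem _ _ (Submodule.mem_span_singleton_self e))
      show ((b, t • u) : AA F V T) = 0
      rw [hb0, ht0, zero_smul]
      rfl
    · -- I ⊔ J = ⊤
      refine le_antisymm le_top fun m _ => ?_
      rw [LieSubmodule.mem_sup]
      obtain ⟨a, v⟩ := m
      have hv : v ∈ (Submodule.span F {e} ⊔ Submodule.span F {u}) ⊔ C := by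
        rw [hC.codisjoint.eq_top]
        trivial
      obtain ⟨p, hp, cc, hcc, hpc⟩ := Submodule.mem_sup.1 hv
      obtain ⟨p1, hp1, p2, hp2, hp12⟩ := Submodule.mem_sup.1 hp
      refine ⟨show AA F V T from ((0 : F), p2), ⟨Submodule.zero_mem _, hp2⟩,
        show AA F V T from (a, p1 + cc),
        ⟨trivial, Submodule.add_mem _ (Submodule.mem_sup_right hp1) (Submodule.mem_sup_left hcc)⟩, ?_⟩
      show ((0 + a, p2 + (p1 + cc)) : F × V) = ((a, v) : F × V)
      ext
      · show 0 + a = a; ring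
      · show p2 + (p1 + cc) = v
        rw [← hpc, ← hp12]
        abel

end AA

end Aux3
/-- For an indecomposable almost Abelian Lie algebra `L = F e₀ ⋉ V` not isomorphic to the
Heisenberg algebra: every automorphism preserves `V` and is of the form
`e₀ ↦ α e₀ + γ`, `v ↦ Δ v` with `α ∈ F*`, `γ ∈ V`, `Δ ∈ GL(V)`, `Δ ∘ ad_{e₀} = α • ad_{e₀} ∘ Δ`;
and conversely every such map is an automorphism. -/
theorem stmt13 (F V : Type*) [Field F] [AddCommGroup V] [Module F V]
    (T : Module.End F V) (hT : T ≠ 0) (hind : LieIndecomposable F (AA F V T))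
    (hheis : ¬Nonempty (AA F V T ≃ₗ⁅F⁆ Heisenberg F)) :
    (∀ φ : AA F V T ≃ₗ⁅F⁆ AA F V T,
      Submodule.map φ.toLieHom.toLinearMap (LinearMap.range (AA.incl T))
          = LinearMap.range (AA.incl T) ∧
      ∃ (α : F) (γ : V) (Δ : V ≃ₗ[F] V), α ≠ 0 ∧
        φ (AA.e0 T) = α • AA.e0 T + AA.incl T γ ∧
        (∀ v : V, φ (AA.incl T v) = AA.incl T (Δ v)) ∧
        ∀ v : V, Δ (T v) = α • T (Δ v)) ∧
    (∀ (α : F) (γ : V) (Δ : V ≃ₗ[F] V), α ≠ 0 → (∀ v : V, Δ (T v) = α • T (Δ v)) →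
      ∃ φ : AA F V T ≃ₗ⁅F⁆ AA F V T,
        φ (AA.e0 T) = α • AA.e0 T + AA.incl T γ ∧
        ∀ v : V, φ (AA.incl T v) = AA.incl T (Δ v)) := by
  constructor
  · intro φ
    have hf : ∀ v, AA.fstL T (φ (AA.incl T v)) = 0 := AA.key hT hind hheis φ
    have hfs : ∀ v, AA.fstL T (φ.symm (AA.incl T v)) = 0 := AA.key hT hind hheis φ.symm
    have hD : ∀ v, φ (AA.incl T v) = AA.incl T (AA.sndL T (φ (AA.incl T v))) :=
      fun v => AA.eq_incl_snd _ (hf v)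
    have hDs : ∀ v, φ.symm (AA.incl T v) = AA.incl T (AA.sndL T (φ.symm (AA.incl T v))) :=
      fun v => AA.eq_incl_snd _ (hfs v)
    have hap : ∀ x, φ.toLieHom.toLinearMap x = φ x := fun _ => rfl
    constructor
    · -- φ(V) = V
      apply le_antisymm
      · rintro x hx
        rw [Submodule.mem_map] at hx
        obtain ⟨y, hy, rfl⟩ := hx
        rw [LinearMap.mem_range] at hy
        obtain ⟨v, rfl⟩ := hy
        rw [LinearMap.mem_range]
        exact ⟨AA.sndL T (φ (AA.incl T v)), by rw [hap, ← hD v]⟩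
      · rintro x hx
        rw [LinearMap.mem_range] at hx
        obtain ⟨v, rfl⟩ := hx
        rw [Submodule.mem_map]
        refine ⟨φ.symm (AA.incl T v), ?_, ?_⟩
        · rw [LinearMap.mem_range]
          exact ⟨AA.sndL T (φ.symm (AA.incl T v)), (hDs v).symm⟩
        · rw [hap, LieEquiv.apply_symm_apply]
    · -- the shape of φ
      set α : F := AA.fstL T (φ (AA.e0 T)) with hαdef
      set γ : V := AA.sndL T (φ (AA.e0 T)) with hγdef
      have hαne : α ≠ 0 := by
        intro hα0
        have h1 : φ (AA.e0 T) = AA.incl T γ := by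
          rw [hγdef]
          exact AA.eq_incl_snd _ hα0
        have h2 : AA.e0 T = φ.symm (AA.incl T γ) := by
          rw [← h1, LieEquiv.symm_apply_apply]
        have h3 := congrArg (AA.fstL T) h2
        rw [AA.fstL_e0, hfs γ] at h3
        exact one_ne_zero h3
      set Dl : V →ₗ[F] V :=
        (AA.sndL T).comp (φ.toLinearEquiv.toLinearMap.comp (AA.incl T)) with hDldef
      set El : V →ₗ[F] V :=
        (AA.sndL T).comp (φ.symm.toLinearEquiv.toLinearMap.comp (AA.incl T)) with hEldef
      have hDla : ∀ v, Dl v = AA.sndL T (φ (AA.incl T v)) := fun _ => rfl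
      have hEla : ∀ v, El v = AA.sndL T (φ.symm (AA.incl T v)) := fun _ => rfl
      have hleft : ∀ v, El (Dl v) = v := fun v => by
        have h1 : φ.symm (AA.incl T (Dl v)) = AA.incl T v := by
          rw [hDla, ← hD v, LieEquiv.symm_apply_apply]
        rw [hEla, h1, AA.sndL_incl]
      have hright : ∀ v, Dl (El v) = v := fun v => by
        have h1 : φ (AA.incl T (El v)) = AA.incl T v := by
          rw [hEla, ← hDs v, LieEquiv.apply_symm_apply]
        rw [hDla, h1, AA.sndL_incl]
      set Δ : V ≃ₗ[F] V :=
        { Dl with invFun := El, left_inv := hleft, right_inv := hright } with hΔdef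
      have hΔa : ∀ v, Δ v = AA.sndL T (φ (AA.incl T v)) := fun _ => rfl
      refine ⟨α, γ, Δ, hαne, ?_, ?_, ?_⟩
      · exact AA.expand (φ (AA.e0 T))
      · intro v
        rw [hΔa]
        exact hD v
      · intro v
        have hplie : φ (AA.incl T (T v)) = ⁅φ (AA.e0 T), φ (AA.incl T v)⁆ := by
          rw [← AA.bracket_e0_incl, LieEquiv.map_lie]
        have h2 := congrArg (AA.sndL T) hplie
        rw [AA.sndL_bracket, hf v, zero_smul, sub_zero] at h2
        rw [hΔa, hΔa, h2]
  · intro α γ Δ hα hΔ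
    exact ⟨AA.mkAut T α hα γ Δ hΔ, AA.mkAut_e0 α hα γ Δ hΔ, AA.mkAut_incl α hα γ Δ hΔ⟩
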